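/- Let α > 0, β, μ ∈ ℝ with 4α²μ + β² > 0 and define Γ₁ = −2α²/β (β ≠ 0), Γ₂ = √(4μα² + β²)/β, and W(z) = Γ₁/(1 + Γ₂ cosh(αz)). Then Γ₂² − (μ/α²)Γ₁² = 1, and whenever 1 + Γ₂cosh(αz) ≠ 0 on ℝ (e.g. when Γ₂ > 0, or when Γ₂ ≤ 0 and |Γ₂| < 1), W satisfies (W′)² = W²(α² + βW − μW²) pointwise on the set where the denominator does not vanish. -/

import Mathlib

theorem stmt18 (α β μ : ℝ) (hα : 0 < α) (hβ : β ≠ 0) (hβμ : 0 < 4 * α ^ 2 * μ + β ^ 2)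
    (Γ₁ Γ₂ : ℝ) (hΓ₁ : Γ₁ = -2 * α ^ 2 / β) (hΓ₂ : Γ₂ = Real.sqrt (4 * μ * α ^ 2 + β ^ 2) / β)
    (W : ℝ → ℝ) (hW : ∀ z, W z = Γ₁ / (1 + Γ₂ * Real.cosh (α * z))) :
    Γ₂ ^ 2 - (μ / α ^ 2) * Γ₁ ^ 2 = 1 ∧
    ((∀ z, 1 + Γ₂ * Real.cosh (α * z) ≠ 0) →
      ∀ z, (deriv W z) ^ 2 = (W z) ^ 2 * (α ^ 2 + β * W z - μ * (W z) ^ 2)) := by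
  have hαne : (α : ℝ) ≠ 0 := ne_of_gt hα
  have hsq : Real.sqrt (4 * μ * α ^ 2 + β ^ 2) ^ 2 = 4 * μ * α ^ 2 + β ^ 2 := by
    apply Real.sq_sqrt; nlinarith
  have hΓ₂sq : Γ₂ ^ 2 = (4 * μ * α ^ 2 + β ^ 2) / β ^ 2 := by
    rw [hΓ₂, div_pow, hsq]
  have h1 : Γ₂ ^ 2 - (μ / α ^ 2) * Γ₁ ^ 2 = 1 := by
    rw [hΓ₂sq, hΓ₁]
    field_simp
    ring
  refine ⟨h1, fun hD z => ?_⟩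
  have hDz := hD z
  have hder : HasDerivAt W (-(Γ₁ * (Γ₂ * (Real.sinh (α * z) * α))) /
      (1 + Γ₂ * Real.cosh (α * z)) ^ 2) z := by
    have hc : HasDerivAt (fun z : ℝ => 1 + Γ₂ * Real.cosh (α * z))
        (Γ₂ * (Real.sinh (α * z) * α)) z := by
      have := ((Real.hasDerivAt_cosh (α * z)).comp z
        ((hasDerivAt_id z).const_mul α)).const_mul Γ₂
      simpa [mul_comm, mul_assoc] using this.const_add 1
    have := ((hasDerivAt_const z Γ₁).div hc hDz)
    have hW' : W = fun z => Γ₁ / (1 + Γ₂ * Real.cosh (α * z)) := funext hW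
    rw [hW']
    convert this using 1
    all_goals first | rfl | ring
  rw [hder.deriv, hW z]
  have hβΓ : β * Γ₁ = -2 * α ^ 2 := by rw [hΓ₁]; field_simp
  have hsinh : Real.sinh (α * z) ^ 2 = Real.cosh (α * z) ^ 2 - 1 := by
    have := Real.cosh_sq_sub_sinh_sq (α * z); nlinarith
  have hμΓ : μ * Γ₁ ^ 2 = α ^ 2 * Γ₂ ^ 2 - α ^ 2 := by
    have := h1
    field_simp at this ⊢
    nlinarith [this]
  set c := Real.cosh (α * z)
  set s := Real.sinh (α * z)
  set D := 1 + Γ₂ * c with hDdef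
  clear_value s c
  have key : α ^ 2 * Γ₂ ^ 2 * s ^ 2 = α ^ 2 * D ^ 2 + β * Γ₁ * D - μ * Γ₁ ^ 2 := by
    rw [hDdef]
    linear_combination (α ^ 2 * Γ₂ ^ 2) * hsinh - (1 + Γ₂ * c) * hβΓ + hμΓ
  clear_value D
  calc (-(Γ₁ * (Γ₂ * (s * α))) / D ^ 2) ^ 2
      = Γ₁ ^ 2 * (α ^ 2 * Γ₂ ^ 2 * s ^ 2) / D ^ 4 := by ring
    _ = Γ₁ ^ 2 * (α ^ 2 * D ^ 2 + β * Γ₁ * D - μ * Γ₁ ^ 2) / D ^ 4 := by rw [key]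
    _ = (Γ₁ / D) ^ 2 * (α ^ 2 + β * (Γ₁ / D) - μ * (Γ₁ / D) ^ 2) := by
        field_simp
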